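/- Let ℓ ≥ 1 be an integer, α ∈ (0,1), and let ⪯ be any total order on the set O of possible (tail, adjusted-count) observations. Fix t ∈ {0,1,…,ℓ} and let {(C_{i,j}, T_{i,j}) : 0 ≤ i ≤ t, 1 ≤ j ≤ C(t,i)} be mutually independent pairs each distributed according to F, and let maxPair_⪯(t) be the ⪯-maximum of the pairs (T_{i,j}, C_{i,j} − i). Then for every t' ∈ {0,1,…,ℓ}, the probability that the tail component of maxPair_⪯(t) equals t' is strictly positive. (Consequently, the Markov chain on states {0,…,ℓ} induced by any such policy has all transition probabilities positive, so the reduced RANDAO MDP is ergodic.) -/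

import Mathlib

open MeasureTheory ProbabilityTheory
open scoped ENNReal

/-- The probability mass function of the distribution `F` of the pair `(C, T)` (count, tail):
`T ~ geom'(α)` on `{0,…,ℓ}` and, given `T = t ≤ ℓ-2`, `C ~ Binomial(ℓ-t-1, α)`,
while `C = 0` when `T ∈ {ℓ-1, ℓ}`. -/
noncomputable def Fmass (ℓ : ℕ) (α : ℝ≥0∞) (c t : ℕ) : ℝ≥0∞ :=
  if t = ℓ then (if c = 0 then α ^ ℓ else 0)
  else if t + 2 ≤ ℓ then
    (1 - α) * α ^ t * (Nat.choose (ℓ - t - 1) c) * α ^ c * (1 - α) ^ (ℓ - t - 1 - c)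
  else if t + 1 = ℓ then (if c = 0 then (1 - α) * α ^ t else 0)
  else 0

/-- The observation set `O`: pairs `(t, ω)` of a tail `t ∈ {0,…,ℓ}` and an adjusted count
`ω ∈ {-ℓ,…,ℓ}` with `ω ≤ 0` when `t = ℓ` and `ω ≤ ℓ - t - 1` when `t < ℓ`.
(The tail is the first component, the adjusted count the second.) -/
noncomputable def Oset (ℓ : ℕ) : Finset (ℕ × ℤ) :=
  (Finset.range (ℓ + 1) ×ˢ Finset.Icc (-(ℓ : ℤ)) (ℓ : ℤ)).filter
    fun p => (p.1 = ℓ → p.2 ≤ 0) ∧ (p.1 < ℓ → p.2 ≤ (ℓ : ℤ) - p.1 - 1)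


lemma exists_max_of_total {β : Type*} (le : β → β → Prop) (O : Finset β)
    (htotal : ∀ a ∈ O, ∀ b ∈ O, le a b ∨ le b a)
    (htrans : ∀ a ∈ O, ∀ b ∈ O, ∀ c ∈ O, le a b → le b c → le a c) :
    ∀ s : Finset β, s ⊆ O → s.Nonempty → ∃ a ∈ s, ∀ b ∈ s, le b a := by
  classical
  intro s
  induction s using Finset.induction_on with
  | empty => intro _ h; exact absurd h (by simp)
  | @insert x s hx ih =>
    intro hsub _
    have hxO : x ∈ O := hsub (Finset.mem_insert_self x s)
    have hxx : le x x := by rcases htotal x hxO x hxO with h | h <;> exact h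
    by_cases hs : s.Nonempty
    · obtain ⟨a, ha, hmax⟩ := ih (fun y hy => hsub (Finset.mem_insert_of_mem hy)) hs
      have haO : a ∈ O := hsub (Finset.mem_insert_of_mem ha)
      rcases htotal x hxO a haO with h | h
      · refine ⟨a, Finset.mem_insert_of_mem ha, fun b hb => ?_⟩
        rcases Finset.mem_insert.mp hb with rfl | hb
        · exact h
        · exact hmax b hb
      · refine ⟨x, Finset.mem_insert_self x s, fun b hb => ?_⟩
        rcases Finset.mem_insert.mp hb with rfl | hb
        · exact hxx
        · exact htrans b (hsub (Finset.mem_insert_of_mem hb)) a haO x hxO (hmax b hb) h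
    · refine ⟨x, Finset.mem_insert_self x s, fun b hb => ?_⟩
      rcases Finset.mem_insert.mp hb with rfl | hb
      · exact hxx
      · exact absurd ⟨b, hb⟩ hs

lemma Fmass_zero_pos (ℓ : ℕ) (α : ℝ≥0∞) (hα0 : 0 < α) (hα1 : α < 1)
    (t' : ℕ) (ht' : t' ≤ ℓ) : Fmass ℓ α 0 t' ≠ 0 := by
  have hα : α ≠ 0 := hα0.ne'
  have h1α : (1 : ℝ≥0∞) - α ≠ 0 := (tsub_pos_of_lt hα1).ne'
  unfold Fmass
  rcases eq_or_lt_of_le ht' with rfl | hlt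
  · simp [pow_ne_zero _ hα]
  · rcases Nat.lt_or_ge (t' + 1) ℓ with h2 | h2
    · have : t' + 2 ≤ ℓ := h2
      simp only [hlt.ne, if_false, this, if_true, Nat.choose_zero_right]
      refine mul_ne_zero (mul_ne_zero (mul_ne_zero (mul_ne_zero h1α (pow_ne_zero _ hα)) ?_) ?_)
        (pow_ne_zero _ h1α)
      · simp
      · simp
    · have h3 : t' + 1 = ℓ := le_antisymm hlt h2
      have h4 : ¬ (t' + 2 ≤ ℓ) := by omega
      simp only [hlt.ne, if_false, h4, h3, if_true]
      exact mul_ne_zero h1α (pow_ne_zero _ hα)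

/-- ergodicity of the reduced RANDAO MDP: let `⪯` be any total order on `O`, and
let `(C_{i,j}, T_{i,j})`, `0 ≤ i ≤ t`, `1 ≤ j ≤ C(t,i)`, be mutually independent pairs each
distributed according to `F`. Then for every `t' ∈ {0,…,ℓ}`, with strictly positive
probability the `⪯`-maximum of the observations `(T_{i,j}, C_{i,j} - i)` has tail
component equal to `t'` (the maximum being witnessed by an index `k` whose observation
`⪯`-dominates all others). -/
theorem maxPair_tail_positive
    {Ω : Type*} [MeasurableSpace Ω] (μ : Measure Ω) [IsProbabilityMeasure μ]
    (ℓ : ℕ) (hℓ : 1 ≤ ℓ) (α : ℝ≥0∞) (hα0 : 0 < α) (hα1 : α < 1)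
    (t : ℕ) (ht : t ≤ ℓ)
    (le : ℕ × ℤ → ℕ × ℤ → Prop)
    (htotal : ∀ a ∈ Oset ℓ, ∀ b ∈ Oset ℓ, le a b ∨ le b a)
    (hantisymm : ∀ a ∈ Oset ℓ, ∀ b ∈ Oset ℓ, le a b → le b a → a = b)
    (htrans : ∀ a ∈ Oset ℓ, ∀ b ∈ Oset ℓ, ∀ c ∈ Oset ℓ, le a b → le b c → le a c)
    (V : (Σ i : Fin (t + 1), Fin (Nat.choose t i)) → Ω → ℕ × ℕ)
    (hmeas : ∀ k, Measurable (V k))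
    (hindep : iIndepFun V μ)
    (hF : ∀ k, ∀ c t'' : ℕ, μ {ω | V k ω = (c, t'')} = Fmass ℓ α c t'') :
    ∀ t' : ℕ, t' ≤ ℓ →
      0 < μ {ω | ∃ k : (Σ i : Fin (t + 1), Fin (Nat.choose t i)),
        (V k ω).2 = t' ∧
        ∀ k' : (Σ i : Fin (t + 1), Fin (Nat.choose t i)),
          le ((V k' ω).2, ((V k' ω).1 : ℤ) - ((k'.1 : ℕ) : ℤ))
            ((V k ω).2, ((V k ω).1 : ℤ) - ((k.1 : ℕ) : ℤ))} := by
  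
  intro t' ht'
  classical
  have hmeasE : μ (⋂ k, V k ⁻¹' {((0 : ℕ), t')}) = ∏ _k : (Σ i : Fin (t + 1), Fin (Nat.choose t i)), Fmass ℓ α 0 t' := by
    have h := hindep.measure_inter_preimage_eq_mul (S := Finset.univ)
      (sets := fun _ => ({((0 : ℕ), t')} : Set (ℕ × ℕ)))
      (fun _ _ => measurableSet_singleton _)
    simp only [Finset.mem_univ, Set.iInter_true] at h
    rw [h]
    refine Finset.prod_congr rfl fun k _ => ?_
    have := hF k 0 t'
    simpa [Set.preimage, Set.setOf_eq_eq_singleton] using this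
  have hEpos : 0 < μ (⋂ k, V k ⁻¹' {((0 : ℕ), t')}) := by
    rw [hmeasE, Finset.prod_const]
    exact pos_iff_ne_zero.mpr (pow_ne_zero _ (Fmass_zero_pos ℓ α hα0 hα1 t' ht'))
  refine lt_of_lt_of_le hEpos (measure_mono ?_)
  intro ω hω
  have hV : ∀ k, V k ω = (0, t') := fun k => Set.mem_iInter.mp hω k
  have hsO : Finset.image (fun i : Fin (t + 1) => ((t' : ℕ), -((i : ℕ) : ℤ))) Finset.univ
      ⊆ Oset ℓ := by
    intro p hp
    obtain ⟨i, _, rfl⟩ := Finset.mem_image.mp hp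
    have hi : (i : ℕ) ≤ t := Nat.lt_succ_iff.mp i.isLt
    simp only [Oset, Finset.mem_filter, Finset.mem_product, Finset.mem_range, Finset.mem_Icc]
    refine ⟨⟨by omega, by constructor <;> omega⟩, fun _ => by omega, fun h => by omega⟩
  have hsne : (Finset.image (fun i : Fin (t + 1) => ((t' : ℕ), -((i : ℕ) : ℤ)))
      Finset.univ).Nonempty :=
    ⟨((t' : ℕ), -(((0 : Fin (t+1)) : ℕ) : ℤ)),
      Finset.mem_image.mpr ⟨0, Finset.mem_univ _, rfl⟩⟩
  obtain ⟨a, ha, hamax⟩ := exists_max_of_total le (Oset ℓ) htotal htrans _ hsO hsne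
  obtain ⟨i₀, _, rfl⟩ := Finset.mem_image.mp ha
  have hpos : 0 < Nat.choose t (i₀ : ℕ) :=
    Nat.choose_pos (Nat.lt_succ_iff.mp i₀.isLt)
  refine ⟨⟨i₀, ⟨0, hpos⟩⟩, ?_, ?_⟩
  · rw [hV ⟨i₀, ⟨0, hpos⟩⟩]
  · intro k'
    have h1 : ((V k' ω).2, ((V k' ω).1 : ℤ) - ((k'.1 : ℕ) : ℤ))
        = ((t' : ℕ), -((k'.1 : ℕ) : ℤ)) := by rw [hV k']; simp
    have h2 : ((V ⟨i₀, ⟨0, hpos⟩⟩ ω).2,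
        ((V ⟨i₀, ⟨0, hpos⟩⟩ ω).1 : ℤ) - (((⟨i₀, ⟨0, hpos⟩⟩ : Σ i : Fin (t + 1),
          Fin (Nat.choose t i)).1 : ℕ) : ℤ))
        = ((t' : ℕ), -((i₀ : ℕ) : ℤ)) := by rw [hV ⟨i₀, ⟨0, hpos⟩⟩]; simp
    rw [h1, h2]
    exact hamax _ (Finset.mem_image.mpr ⟨k'.1, Finset.mem_univ _, rfl⟩)
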